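/- Let n ≥ 1 and k ≥ 1. If F_1, ..., F_{2n+k-2} are sets of edges in a bipartite graph such that the union of every k of them contains a matching of size n, then there exists a rainbow matching of size n (a matching of n edges chosen from n distinct members of the family). -/

import Mathlib

/-- A set of edges of a bipartite graph (edges given as pairs) is a matching
if distinct edges share no endpoint. -/
def IsMatching {α β : Type*} (M : Set (α × β)) : Prop :=
  ∀ e ∈ M, ∀ f ∈ M, e ≠ f → e.1 ≠ f.1 ∧ e.2 ≠ f.2

/-- `F` contains a matching of size `n`. -/
def HasMatchingOfSize {α β : Type*} (n : ℕ) (F : Set (α × β)) : Prop :=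
  ∃ e : Fin n → α × β, Function.Injective e ∧ (∀ j, e j ∈ F) ∧
    IsMatching (Set.range e)

/-- The family `F` has a rainbow matching of size `n`: `n` pairwise disjoint
edges chosen from `n` distinct members of the family. -/
def HasRainbowMatchingOfSize {α β ι : Type*} (n : ℕ) (F : ι → Set (α × β)) : Prop :=
  ∃ (g : Fin n ↪ ι) (e : Fin n → α × β), Function.Injective e ∧
    (∀ j, e j ∈ F (g j)) ∧ IsMatching (Set.range e)

open Classical

section Aug
variable {α β ι : Type*} {F : ι → Set (α × β)} {m : ℕ}

lemma coord1_inj {e : Fin m → α × β} (he : Function.Injective e)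
    (hM : IsMatching (Set.range e)) {s s' : Fin m} (h : (e s).1 = (e s').1) : s = s' := by
  by_contra hne
  exact (hM (e s) ⟨s, rfl⟩ (e s') ⟨s', rfl⟩ (fun hee => hne (he hee))).1 h

lemma coord2_inj {e : Fin m → α × β} (he : Function.Injective e)
    (hM : IsMatching (Set.range e)) {s s' : Fin m} (h : (e s).2 = (e s').2) : s = s' := by
  by_contra hne
  exact (hM (e s) ⟨s, rfl⟩ (e s') ⟨s', rfl⟩ (fun hee => hne (he hee))).2 h

lemma aug (g : Fin m ↪ ι) (e : Fin m → α × β)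
    (heI : Function.Injective e) (heM : IsMatching (Set.range e))
    (heF : ∀ s, e s ∈ F (g s))
    (r : ℕ) (d : ℕ → α × β) (cc : ℕ → ι) (τ : ℕ → Fin m)
    (hτ : ∀ q1 < r, ∀ q2 < r, τ q1 = τ q2 → q1 = q2)
    (hcc : ∀ q1 ≤ r, ∀ q2 ≤ r, cc q1 = cc q2 → q1 = q2)
    (hccg : ∀ q ≤ r, ∀ s, cc q ≠ g s)
    (hdF : ∀ q ≤ r, d q ∈ F (cc q))
    (hd0 : ∀ s, (e s).1 ≠ (d 0).1)
    (hda : ∀ q < r, (d (q+1)).1 = (e (τ q)).1)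
    (hdb : ∀ q < r, (d q).2 = (e (τ q)).2)
    (hlast : ∀ s, (e s).2 ≠ (d r).2) :
    HasRainbowMatchingOfSize (m+1) F := by
  set Q : Fin m → Prop := fun s => ∃ q, q < r ∧ τ q = s with hQ
  -- chosen index
  have hQspec : ∀ {s} (h : Q s), choose h < r ∧ τ (choose h) = s := fun h => choose_spec h
  set edge : Fin m → α × β := fun s => if h : Q s then d (choose h + 1) else e s with hedge
  set col : Fin m → ι := fun s => if h : Q s then cc (choose h + 1) else g s with hcol
  set e' : Fin (m+1) → α × β :=
    fun p => if hp : (p : ℕ) < m then edge ⟨p, hp⟩ else d 0 with he'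
  set g' : Fin (m+1) → ι :=
    fun p => if hp : (p : ℕ) < m then col ⟨p, hp⟩ else cc 0 with hg'
  -- first coordinates of edge
  have hedge1 : ∀ s, (edge s).1 = (e s).1 := by
    intro s
    by_cases h : Q s
    · have := hQspec h
      simp only [hedge, dif_pos h]
      rw [hda _ this.1, this.2]
    · simp only [hedge, dif_neg h]
  have hedgeF : ∀ s, edge s ∈ F (col s) := by
    intro s
    by_cases h : Q s
    · simp only [hedge, hcol, dif_pos h]
      exact hdF _ (by have := (hQspec h).1; omega)
    · simp only [hedge, hcol, dif_neg h]; exact heF s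
  -- second coordinate distinctness
  have sub1 : ∀ s1 s2, (edge s1).2 = (edge s2).2 → s1 = s2 := by
    intro s1 s2 hh
    by_cases h1 : Q s1 <;> by_cases h2 : Q s2
    · obtain ⟨hq1, ht1⟩ := hQspec h1
      obtain ⟨hq2, ht2⟩ := hQspec h2
      simp only [hedge, dif_pos h1, dif_pos h2] at hh
      by_cases hr1 : choose h1 + 1 < r <;> by_cases hr2 : choose h2 + 1 < r
      · rw [hdb _ hr1, hdb _ hr2] at hh
        have h4 := hτ _ hr1 _ hr2 (coord2_inj heI heM hh)
        have h7 : choose h1 = choose h2 := by omega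
        rw [← ht1, ← ht2, h7]
      · have h5 : choose h2 + 1 = r := by omega
        rw [hdb _ hr1, h5] at hh
        exact (hlast _ hh).elim
      · have h5 : choose h1 + 1 = r := by omega
        rw [hdb _ hr2, h5] at hh
        exact (hlast _ hh.symm).elim
      · have e3 : choose h1 = choose h2 := by omega
        rw [← ht1, ← ht2, e3]
    · obtain ⟨hq1, ht1⟩ := hQspec h1
      simp only [hedge, dif_pos h1, dif_neg h2] at hh
      by_cases hr1 : choose h1 + 1 < r
      · rw [hdb _ hr1] at hh
        exact absurd ⟨_, hr1, (coord2_inj heI heM hh.symm).symm⟩ h2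
      · have h5 : choose h1 + 1 = r := by omega
        rw [h5] at hh
        exact (hlast _ hh.symm).elim
    · obtain ⟨hq2, ht2⟩ := hQspec h2
      simp only [hedge, dif_pos h2, dif_neg h1] at hh
      by_cases hr2 : choose h2 + 1 < r
      · rw [hdb _ hr2] at hh
        exact absurd ⟨_, hr2, (coord2_inj heI heM hh).symm⟩ h1
      · have h5 : choose h2 + 1 = r := by omega
        rw [h5] at hh
        exact (hlast _ hh).elim
    · simp only [hedge, dif_neg h1, dif_neg h2] at hh
      exact coord2_inj heI heM hh
  have sub2 : ∀ s, (edge s).2 ≠ (d 0).2 := by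
    intro s hh
    rcases Nat.eq_zero_or_pos r with hr | hr
    · -- r = 0 : Q s is false, (d 0).2 = (d r).2 uncovered
      have hQs : ¬ Q s := by rintro ⟨q, hq, -⟩; omega
      simp only [hedge, dif_neg hQs] at hh
      exact hlast s (by rw [hr]; exact hh)
    · have h0 : (d 0).2 = (e (τ 0)).2 := hdb 0 hr
      by_cases h1 : Q s
      · obtain ⟨hq1, ht1⟩ := hQspec h1
        simp only [hedge, dif_pos h1] at hh
        by_cases hr1 : choose h1 + 1 < r
        · rw [hdb _ hr1, h0] at hh
          have := hτ _ hr1 _ hr (coord2_inj heI heM hh)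
          omega
        · have : choose h1 + 1 = r := by omega
          rw [this, h0] at hh
          exact absurd hh.symm (hlast _)
      · simp only [hedge, dif_neg h1] at hh
        rw [h0] at hh
        exact h1 ⟨0, hr, (coord2_inj heI heM hh).symm⟩
  -- col injective and distinct from cc 0
  have hcolinj : ∀ s1 s2, col s1 = col s2 → s1 = s2 := by
    intro s1 s2 hh
    by_cases h1 : Q s1 <;> by_cases h2 : Q s2
    · obtain ⟨hq1, ht1⟩ := hQspec h1
      obtain ⟨hq2, ht2⟩ := hQspec h2
      simp only [hcol, dif_pos h1, dif_pos h2] at hh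
      have := hcc _ (by omega) _ (by omega) hh
      have : choose h1 = choose h2 := by omega
      rw [← ht1, ← ht2, this]
    · obtain ⟨hq1, ht1⟩ := hQspec h1
      simp only [hcol, dif_pos h1, dif_neg h2] at hh
      exact absurd hh (hccg _ (by omega) _)
    · obtain ⟨hq2, ht2⟩ := hQspec h2
      simp only [hcol, dif_neg h1, dif_pos h2] at hh
      exact absurd hh.symm (hccg _ (by omega) _)
    · simp only [hcol, dif_neg h1, dif_neg h2] at hh
      exact g.injective hh
  have hcolne : ∀ s, col s ≠ cc 0 := by
    intro s hh
    by_cases h1 : Q s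
    · obtain ⟨hq1, ht1⟩ := hQspec h1
      simp only [hcol, dif_pos h1] at hh
      have := hcc _ (by omega) _ (by omega) hh
      omega
    · simp only [hcol, dif_neg h1] at hh
      exact hccg 0 (by omega) s hh.symm
  -- assemble
  have hg'inj : Function.Injective g' := by
    intro p1 p2 hh
    simp only [hg'] at hh
    by_cases hp1 : (p1 : ℕ) < m <;> by_cases hp2 : (p2 : ℕ) < m
    · rw [dif_pos hp1, dif_pos hp2] at hh
      have h6 : (p1 : ℕ) = (p2 : ℕ) := by simpa using congrArg Fin.val (hcolinj _ _ hh)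
      exact Fin.ext h6
    · rw [dif_pos hp1, dif_neg hp2] at hh
      exact absurd hh (hcolne _)
    · rw [dif_neg hp1, dif_pos hp2] at hh
      exact absurd hh.symm (hcolne _)
    · have : (p1 : ℕ) = m := by omega
      have h2 : (p2 : ℕ) = m := by omega
      exact Fin.ext (by omega)
  have he'1 : ∀ p1 p2 : Fin (m+1), p1 ≠ p2 → (e' p1).1 ≠ (e' p2).1 := by
    intro p1 p2 hne hh
    simp only [he'] at hh
    by_cases hp1 : (p1 : ℕ) < m <;> by_cases hp2 : (p2 : ℕ) < m
    · rw [dif_pos hp1, dif_pos hp2, hedge1, hedge1] at hh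
      exact hne (Fin.ext (by simpa using congrArg Fin.val (coord1_inj heI heM hh)))
    · rw [dif_pos hp1, dif_neg hp2, hedge1] at hh
      exact hd0 _ hh
    · rw [dif_neg hp1, dif_pos hp2, hedge1] at hh
      exact hd0 _ hh.symm
    · exact hne (Fin.ext (by omega))
  have he'2 : ∀ p1 p2 : Fin (m+1), p1 ≠ p2 → (e' p1).2 ≠ (e' p2).2 := by
    intro p1 p2 hne hh
    simp only [he'] at hh
    by_cases hp1 : (p1 : ℕ) < m <;> by_cases hp2 : (p2 : ℕ) < m
    · rw [dif_pos hp1, dif_pos hp2] at hh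
      exact hne (Fin.ext (by simpa using congrArg Fin.val (sub1 _ _ hh)))
    · rw [dif_pos hp1, dif_neg hp2] at hh
      exact sub2 _ hh
    · rw [dif_neg hp1, dif_pos hp2] at hh
      exact sub2 _ hh.symm
    · exact hne (Fin.ext (by omega))
  have he'inj : Function.Injective e' := by
    intro p1 p2 hh
    by_contra hne
    exact he'1 p1 p2 hne (congrArg Prod.fst hh)
  refine ⟨⟨g', hg'inj⟩, e', he'inj, ?_, ?_⟩
  · intro p
    simp only [he', hg', Function.Embedding.coeFn_mk]
    by_cases hp : (p : ℕ) < m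
    · rw [dif_pos hp, dif_pos hp]; exact hedgeF _
    · rw [dif_neg hp, dif_neg hp]; exact hdF 0 (by omega)
  · rintro x ⟨p1, rfl⟩ y ⟨p2, rfl⟩ hxy
    have hne : p1 ≠ p2 := fun h => hxy (congrArg e' h)
    exact ⟨he'1 p1 p2 hne, he'2 p1 p2 hne⟩

end Aug

section Main
variable {α β : Type*}

def GoodState {N : ℕ} (F : Fin N → Set (α × β)) {m : ℕ}
    (g : Fin m ↪ Fin N) (e : Fin m → α × β) (t : ℕ) : Prop :=
  ∃ (c : ℕ → Fin N) (f : ℕ → α × β) (ρ : ℕ → Fin m),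
    (∀ i < t, ∀ j < t, c i = c j → i = j) ∧
    (∀ i < t, ∀ s, c i ≠ g s) ∧
    (∀ i < t, f i ∈ F (c i)) ∧
    (∀ i < t, ∀ j < t, ρ i = ρ j → i = j) ∧
    (∀ i < t, (f i).1 = (e (ρ i)).1) ∧
    (∀ i < t, ∃ l : List ℕ,
      (∀ x ∈ (i :: l), x < t) ∧ (i :: l).Nodup ∧
      (∀ q, q + 1 < (i :: l).length →
        (f ((i :: l).getD q 0)).2 = (e (ρ ((i :: l).getD (q+1) 0))).2) ∧
      (∀ s, (e s).2 ≠ (f ((i :: l).getD ((i :: l).length - 1) 0)).2))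

lemma step {n k m : ℕ} (hk : 1 ≤ k) (hmn : m < n) (hm1 : 1 ≤ m)
    {F : Fin (2*n+k-2) → Set (α × β)}
    (hunion : ∀ K : Finset (Fin (2*n+k-2)), K.card = k →
      HasMatchingOfSize n (⋃ i ∈ K, F i))
    (g : Fin m ↪ Fin (2*n+k-2)) (e : Fin m → α × β)
    (heI : Function.Injective e) (heM : IsMatching (Set.range e))
    (heF : ∀ s, e s ∈ F (g s))
    (t : ℕ) (hst : GoodState F g e t) :
    HasRainbowMatchingOfSize (m+1) F ∨ GoodState F g e (t+1) := by
  obtain ⟨c, f, ρ, hcinj, hcg, hfF, hρinj, hfa, hchain⟩ := hst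
  have htm : t ≤ m := by
    have h1 : (Finset.range t).card ≤ (Finset.univ : Finset (Fin m)).card :=
      Finset.card_le_card_of_injOn ρ (fun a _ => Finset.mem_univ _)
        (fun a ha b hb hab => hρinj a (by simpa using ha) b (by simpa using hb) hab)
    simpa using h1
  -- choose fresh color set K
  set used : Finset (Fin (2*n+k-2)) :=
    (Finset.univ.image g) ∪ ((Finset.range t).image c) with hused
  have husedcard : used.card ≤ m + t := le_trans (Finset.card_union_le _ _)
      (add_le_add (le_trans Finset.card_image_le (by simp))
        (le_trans Finset.card_image_le (by simp)))
  have hcompl : k ≤ usedᶜ.card := by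
    rw [Finset.card_compl]
    have hcard : Fintype.card (Fin (2*n+k-2)) = 2*n+k-2 := by simp
    omega
  obtain ⟨K, hKsub, hKcard⟩ := Finset.exists_subset_card_eq hcompl
  obtain ⟨eM, heMI, heMF, heMM⟩ := hunion K hKcard
  have hKfresh : ∀ x ∈ K, (∀ s, x ≠ g s) ∧ (∀ i, i < t → x ≠ c i) := by
    intro x hx
    have hx2 := hKsub hx
    rw [Finset.mem_compl, hused, Finset.mem_union] at hx2
    push_neg at hx2
    constructor
    · intro s hxs; exact hx2.1 (Finset.mem_image.2 ⟨s, Finset.mem_univ _, hxs.symm⟩)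
    · intro i hi hxc; exact hx2.2 (Finset.mem_image.2 ⟨i, Finset.mem_range.2 hi, hxc.symm⟩)
  -- the set W
  set W : Finset (Fin n) := Finset.univ.filter
    (fun w => (∀ s, (e s).2 ≠ (eM w).2) ∨ ∃ i, i < t ∧ (eM w).2 = (e (ρ i)).2) with hW
  have hWcard : t + 1 ≤ W.card := by
    set Wc := Finset.univ.filter
      (fun w => ¬ ((∀ s, (e s).2 ≠ (eM w).2) ∨ ∃ i, i < t ∧ (eM w).2 = (e (ρ i)).2)) with hWc
    have hsplit := Finset.card_filter_add_card_filter_not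
      (s := (Finset.univ : Finset (Fin n)))
      (p := fun w => (∀ s, (e s).2 ≠ (eM w).2) ∨ ∃ i, i < t ∧ (eM w).2 = (e (ρ i)).2)
    rw [← hW, ← hWc] at hsplit
    rw [Finset.card_univ, Fintype.card_fin] at hsplit
    set Sgood := Finset.univ.filter (fun s : Fin m => ∀ i, i < t → ρ i ≠ s) with hSg
    have hSgc : Sgood.card + t = m := by
      have h2 := Finset.card_filter_add_card_filter_not
        (s := (Finset.univ : Finset (Fin m))) (p := fun s => ∀ i, i < t → ρ i ≠ s)
      have h3 : (Finset.univ.filter (fun s : Fin m => ¬ ∀ i, i < t → ρ i ≠ s))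
          = (Finset.range t).image ρ := by
        ext s
        simp only [Finset.mem_filter, Finset.mem_univ, true_and, Finset.mem_image,
          Finset.mem_range]
        push_neg
        constructor
        · rintro ⟨i, hi, hie⟩; exact ⟨i, hi, hie⟩
        · rintro ⟨i, hi, hie⟩; exact ⟨i, hi, hie⟩
      have h4 : ((Finset.range t).image ρ).card = t := by
        rw [Finset.card_image_of_injOn (fun a ha b hb hab =>
          hρinj a (by simpa using ha) b (by simpa using hb) hab)]
        simp
      rw [h3, h4] at h2
      simpa using h2
    have hφ : ∀ w ∈ Wc, ∃ s ∈ Sgood, (e s).2 = (eM w).2 := by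
      intro w hw
      rw [hWc, Finset.mem_filter] at hw
      have hw2 := hw.2
      push_neg at hw2
      obtain ⟨⟨s, hs⟩, hw3⟩ := hw2
      refine ⟨s, ?_, hs⟩
      rw [hSg, Finset.mem_filter]
      refine ⟨Finset.mem_univ _, fun i hi hρi => ?_⟩
      exact hw3 i hi (by rw [← hs, hρi])
    set φ : Fin n → Fin m := fun w =>
      if h : ∃ s ∈ Sgood, (e s).2 = (eM w).2 then choose h else ⟨0, hm1⟩ with hφd
    have hφs : ∀ w ∈ Wc, φ w ∈ Sgood ∧ (e (φ w)).2 = (eM w).2 := by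
      intro w hw
      have h := hφ w hw
      simp only [hφd, dif_pos h]
      exact ⟨(choose_spec h).1, (choose_spec h).2⟩
    have hWcle : Wc.card ≤ Sgood.card := by
      refine Finset.card_le_card_of_injOn φ (fun w hw => (hφs w hw).1) ?_
      intro w1 h1 w2 h2 heq
      have ha := (hφs w1 h1).2
      rw [heq, (hφs w2 h2).2] at ha
      exact coord2_inj heMI heMM ha.symm
    omega
  by_cases hA : ∃ w ∈ W, ∀ s, (e s).1 ≠ (eM w).1
  · -- augmentation
    left
    obtain ⟨w, hwW, hwA⟩ := hA
    obtain ⟨cK, hcKK, hcKF⟩ : ∃ i ∈ K, eM w ∈ F i := by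
      have h := heMF w
      simpa [Set.mem_iUnion] using h
    have hcKfr := hKfresh cK hcKK
    have hwcond : (∀ s, (e s).2 ≠ (eM w).2) ∨ ∃ i, i < t ∧ (eM w).2 = (e (ρ i)).2 :=
      (Finset.mem_filter.1 hwW).2
    rcases hwcond with hub | ⟨i, hit, hib⟩
    · exact aug g e heI heM heF 0 (fun _ => eM w) (fun _ => cK) (fun _ => ⟨0, hm1⟩)
        (by intro q1 h1 q2 h2 _; omega) (by intro q1 h1 q2 h2 _; omega)
        (fun q hq s => hcKfr.1 s) (fun q hq => hcKF) hwA
        (by intro q hq; exact absurd hq (by omega))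
        (by intro q hq; exact absurd hq (by omega)) hub
    · obtain ⟨l, hlp⟩ := hchain i hit
      set L := i :: l with hL
      obtain ⟨hLlt, hLnd, hLch, hLun⟩ := hlp
      set r := L.length with hrdef
      have hr1 : 1 ≤ r := by simp [hrdef, hL]
      have hgetlt : ∀ q, q < r → L.getD q 0 < t := by
        intro q hq
        rw [List.getD_eq_getElem L 0 hq]
        exact hLlt _ (List.getElem_mem hq)
      have hgetinj : ∀ q1 < r, ∀ q2 < r, L.getD q1 0 = L.getD q2 0 → q1 = q2 := by
        intro q1 h1 q2 h2 hh
        rw [List.getD_eq_getElem L 0 h1, List.getD_eq_getElem L 0 h2] at hh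
        exact (hLnd.getElem_inj_iff).1 hh
      refine aug g e heI heM heF r
        (fun q => if q = 0 then eM w else f (L.getD (q-1) 0))
        (fun q => if q = 0 then cK else c (L.getD (q-1) 0))
        (fun q => ρ (L.getD q 0)) ?_ ?_ ?_ ?_ ?_ ?_ ?_ ?_
      · intro q1 h1 q2 h2 hh
        exact hgetinj _ h1 _ h2
          (hρinj _ (hgetlt _ h1) _ (hgetlt _ h2) hh)
      · intro q1 h1 q2 h2 hh
        replace hh : (if q1 = 0 then cK else c (L.getD (q1-1) 0))
            = (if q2 = 0 then cK else c (L.getD (q2-1) 0)) := hh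
        by_cases hz1 : q1 = 0 <;> by_cases hz2 : q2 = 0
        · omega
        · rw [if_pos hz1, if_neg hz2] at hh
          exact absurd hh (hcKfr.2 (L.getD (q2-1) 0) (hgetlt (q2-1) (by omega)))
        · rw [if_neg hz1, if_pos hz2] at hh
          exact absurd hh.symm (hcKfr.2 (L.getD (q1-1) 0) (hgetlt (q1-1) (by omega)))
        · rw [if_neg hz1, if_neg hz2] at hh
          have h8 := hcinj _ (hgetlt (q1-1) (by omega)) _ (hgetlt (q2-1) (by omega)) hh
          have h9 := hgetinj (q1-1) (by omega) (q2-1) (by omega) h8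
          omega
      · intro q hq s
        show (if q = 0 then cK else c (L.getD (q-1) 0)) ≠ g s
        by_cases hz : q = 0
        · rw [if_pos hz]; exact hcKfr.1 s
        · rw [if_neg hz]; exact hcg _ (hgetlt (q-1) (by omega)) s
      · intro q hq
        show (if q = 0 then eM w else f (L.getD (q-1) 0))
            ∈ F (if q = 0 then cK else c (L.getD (q-1) 0))
        by_cases hz : q = 0
        · rw [if_pos hz, if_pos hz]; exact hcKF
        · rw [if_neg hz, if_neg hz]; exact hfF _ (hgetlt (q-1) (by omega))
      · exact hwA
      · intro q hq
        show (if q + 1 = 0 then eM w else f (L.getD (q+1-1) 0)).1 = (e (ρ (L.getD q 0))).1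
        rw [if_neg (by omega : ¬ q + 1 = 0)]
        simp only [Nat.add_sub_cancel]
        exact hfa _ (hgetlt _ hq)
      · intro q hq
        show (if q = 0 then eM w else f (L.getD (q-1) 0)).2 = (e (ρ (L.getD q 0))).2
        by_cases hz : q = 0
        · rw [if_pos hz, hz]
          have h0 : L.getD 0 0 = i := by rw [hL]; exact List.getD_cons_zero
          rw [h0]
          exact hib
        · rw [if_neg hz]
          have hq1 : (q - 1) + 1 < L.length := by omega
          have hc := hLch (q-1) hq1
          rw [(by omega : q - 1 + 1 = q)] at hc
          exact hc
      · intro s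
        show (e s).2 ≠ (if r = 0 then eM w else f (L.getD (r-1) 0)).2
        rw [if_neg (by omega : ¬ r = 0)]
        exact hLun s
  · -- extension
    right
    have hcov : ∀ w ∈ W, ∃ s, (e s).1 = (eM w).1 := by
      intro w hw
      by_contra hno
      push_neg at hno
      exact hA ⟨w, hw, fun s h => hno s h⟩
    set σ : Fin n → Fin m := fun w =>
      if h : ∃ s, (e s).1 = (eM w).1 then choose h else ⟨0, hm1⟩ with hσ
    have hσspec : ∀ w ∈ W, (e (σ w)).1 = (eM w).1 := by
      intro w hw
      have h := hcov w hw
      simp only [hσ, dif_pos h]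
      exact choose_spec h
    have hσinj : Set.InjOn σ ↑W := by
      intro w1 h1 w2 h2 heq
      have ha := hσspec w1 h1
      rw [heq, hσspec w2 h2] at ha
      exact (coord1_inj heMI heMM ha).symm
    have hex : ∃ w ∈ W, ∀ i, i < t → ρ i ≠ σ w := by
      by_contra hno
      push_neg at hno
      have himg : W.image σ ⊆ (Finset.range t).image ρ := by
        intro x hx
        obtain ⟨w, hw, rfl⟩ := Finset.mem_image.1 hx
        obtain ⟨i, hi, hie⟩ := hno w hw
        exact Finset.mem_image.2 ⟨i, Finset.mem_range.2 hi, hie⟩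
      have h1 : W.card ≤ t := by
        calc W.card = (W.image σ).card := (Finset.card_image_of_injOn hσinj).symm
        _ ≤ ((Finset.range t).image ρ).card := Finset.card_le_card himg
        _ ≤ (Finset.range t).card := Finset.card_image_le
        _ = t := by simp
      omega
    obtain ⟨w, hwW, hwfresh⟩ := hex
    obtain ⟨cK, hcKK, hcKF⟩ : ∃ i ∈ K, eM w ∈ F i := by
      have h := heMF w
      simpa [Set.mem_iUnion] using h
    have hcKfr := hKfresh cK hcKK
    unfold GoodState
    refine ⟨Function.update c t cK, Function.update f t (eM w),
      Function.update ρ t (σ w), ?_, ?_, ?_, ?_, ?_, ?_⟩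
    · intro i hi j hj hh
      by_cases hit : i = t <;> by_cases hjt : j = t
      · omega
      · rw [hit, Function.update_self, Function.update_of_ne (by omega) _ _] at hh
        exact absurd hh (hcKfr.2 j (by omega))
      · rw [hjt, Function.update_self, Function.update_of_ne (by omega) _ _] at hh
        exact absurd hh.symm (hcKfr.2 i (by omega))
      · rw [Function.update_of_ne (by omega) _ _, Function.update_of_ne (by omega) _ _] at hh
        exact hcinj i (by omega) j (by omega) hh
    · intro i hi s
      by_cases hit : i = t
      · rw [hit, Function.update_self]; exact hcKfr.1 s
      · rw [Function.update_of_ne (by omega) _ _]; exact hcg i (by omega) s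
    · intro i hi
      by_cases hit : i = t
      · rw [hit, Function.update_self, Function.update_self]; exact hcKF
      · rw [Function.update_of_ne (by omega) _ _, Function.update_of_ne (by omega) _ _]
        exact hfF i (by omega)
    · intro i hi j hj hh
      by_cases hit : i = t <;> by_cases hjt : j = t
      · omega
      · rw [hit, Function.update_self, Function.update_of_ne (by omega) _ _] at hh
        exact absurd hh.symm (hwfresh j (by omega))
      · rw [hjt, Function.update_self, Function.update_of_ne (by omega) _ _] at hh
        exact absurd hh (hwfresh i (by omega))
      · rw [Function.update_of_ne (by omega) _ _, Function.update_of_ne (by omega) _ _] at hh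
        exact hρinj i (by omega) j (by omega) hh
    · intro i hi
      by_cases hit : i = t
      · rw [hit, Function.update_self, Function.update_self]
        exact (hσspec w hwW).symm
      · rw [Function.update_of_ne (by omega) _ _, Function.update_of_ne (by omega) _ _]
        exact hfa i (by omega)
    · intro i hi
      beta_reduce
      by_cases hit : i = t
      · rw [hit]
        have hwcond : (∀ s, (e s).2 ≠ (eM w).2) ∨ ∃ j, j < t ∧ (eM w).2 = (e (ρ j)).2 :=
          (Finset.mem_filter.1 hwW).2
        rcases hwcond with hub | ⟨j, hjt, hjb⟩
        · refine ⟨[], ?_, ?_, ?_, ?_⟩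
          · intro x hx
            simp only [List.mem_cons, List.not_mem_nil, or_false] at hx
            omega
          · simp
          · intro q hq
            simp only [List.length_cons, List.length_nil] at hq
            exact absurd hq (by omega)
          · intro s
            show (e s).2 ≠ (Function.update f t (eM w) (([t] : List ℕ).getD 0 0)).2
            rw [List.getD_cons_zero, Function.update_self]
            exact hub s
        · obtain ⟨lj, hjlt, hjnd, hjch, hjun⟩ := hchain j hjt
          refine ⟨j :: lj, ?_, ?_, ?_, ?_⟩
          · intro x hx
            rcases List.mem_cons.1 hx with h | h
            · omega
            · have := hjlt x h; omega
          · rw [List.nodup_cons]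
            exact ⟨fun hmem => absurd (hjlt t hmem) (by omega), hjnd⟩
          · intro q hq
            rcases Nat.eq_zero_or_pos q with hz | hz
            · subst hz
              show (Function.update f t (eM w) ((t :: j :: lj).getD 0 0)).2
                  = (e (Function.update ρ t (σ w) ((t :: j :: lj).getD (0+1) 0))).2
              have e1 : (t :: j :: lj).getD 0 0 = t := List.getD_cons_zero
              have e2 : (t :: j :: lj).getD (0+1) 0 = j := by
                rw [(by norm_num : (0:ℕ)+1 = 0+1)]
                rw [List.getD_cons_succ, List.getD_cons_zero]
              rw [e1, e2, Function.update_self,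
                Function.update_of_ne (by omega : j ≠ t) _ _]
              exact hjb
            · have hq' : (q - 1) + 1 < (j :: lj).length := by
                simp only [List.length_cons] at hq ⊢
                omega
              have hc := hjch (q-1) hq'
              have e1 : (t :: j :: lj).getD q 0 = (j :: lj).getD (q-1) 0 := by
                rcases Nat.exists_eq_add_of_le hz with ⟨q', hq'eq⟩
                subst hq'eq
                rw [(by omega : 1 + q' = q' + 1), List.getD_cons_succ]
                congr 1 <;> omega
              have e2 : (t :: j :: lj).getD (q+1) 0 = (j :: lj).getD q 0 :=
                List.getD_cons_succ
              rw [e1, e2]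
              have hlt1 : (j :: lj).getD (q-1) 0 < t := by
                rw [List.getD_eq_getElem _ 0 (by omega)]
                exact hjlt _ (List.getElem_mem _)
              have hlt2 : (j :: lj).getD q 0 < t := by
                have hq2 : q < (j :: lj).length := by
                  simp only [List.length_cons] at hq ⊢
                  omega
                rw [List.getD_eq_getElem _ 0 hq2]
                exact hjlt _ (List.getElem_mem _)
              rw [Function.update_of_ne (by omega) _ _,
                Function.update_of_ne (by omega) _ _]
              rw [(by omega : q - 1 + 1 = q)] at hc
              exact hc
          · intro s
            have hlen : (t :: j :: lj).length - 1 = ((j :: lj).length - 1) + 1 := by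
              simp only [List.length_cons]
              omega
            rw [hlen, List.getD_cons_succ]
            have hlt : (j :: lj).getD ((j :: lj).length - 1) 0 < t := by
              rw [List.getD_eq_getElem _ 0 (by simp)]
              exact hjlt _ (List.getElem_mem _)
            rw [Function.update_of_ne (by omega) _ _]
            exact hjun s
      · -- old chain still works
        obtain ⟨l, hlt', hlnd, hlch, hlun⟩ := hchain i (by omega)
        have hmemlt : ∀ x ∈ (i :: l), x < t := hlt'
        refine ⟨l, ?_, hlnd, ?_, ?_⟩
        · intro x hx; have := hmemlt x hx; omega
        · intro q hq
          have hlt1 : (i :: l).getD q 0 < t := by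
            rw [List.getD_eq_getElem _ 0 (by omega)]
            exact hmemlt _ (List.getElem_mem _)
          have hlt2 : (i :: l).getD (q+1) 0 < t := by
            rw [List.getD_eq_getElem _ 0 hq]
            exact hmemlt _ (List.getElem_mem _)
          rw [Function.update_of_ne (by omega) _ _, Function.update_of_ne (by omega) _ _]
          exact hlch q hq
        · intro s
          have hlt1 : (i :: l).getD ((i :: l).length - 1) 0 < t := by
            rw [List.getD_eq_getElem _ 0 (by simp)]
            exact hmemlt _ (List.getElem_mem _)
          rw [Function.update_of_ne (by omega) _ _]
          exact hlun s



lemma key {n k m : ℕ} (hn : 1 ≤ n) (hk : 1 ≤ k) (hmn : m < n)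
    {F : Fin (2*n+k-2) → Set (α × β)}
    (hunion : ∀ K : Finset (Fin (2*n+k-2)), K.card = k →
      HasMatchingOfSize n (⋃ i ∈ K, F i))
    (hm : HasRainbowMatchingOfSize m F) :
    HasRainbowMatchingOfSize (m+1) F := by
  obtain ⟨g, e, heI, heF, heM⟩ := hm
  rcases Nat.eq_zero_or_pos m with hm0 | hm1
  · subst hm0
    have hkle : k ≤ (Finset.univ : Finset (Fin (2*n+k-2))).card := by
      rw [Finset.card_univ, Fintype.card_fin]; omega
    obtain ⟨K, hKsub, hKcard⟩ := Finset.exists_subset_card_eq hkle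
    obtain ⟨eM, heMI, heMF, heMM⟩ := hunion K hKcard
    have h0 : (0:ℕ) < n := by omega
    obtain ⟨cK, hcKK, hcKF⟩ : ∃ i ∈ K, eM ⟨0,h0⟩ ∈ F i := by
      simpa [Set.mem_iUnion] using heMF ⟨0,h0⟩
    refine ⟨⟨fun _ => cK, fun a b _ => Fin.ext (by omega)⟩,
      fun _ => eM ⟨0,h0⟩, fun a b _ => Fin.ext (by omega), fun j => hcKF, ?_⟩
    rintro x ⟨p1, rfl⟩ y ⟨p2, rfl⟩ hxy
    have hp : p1 = p2 := Fin.ext (by omega)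
    exact (hxy (by rw [hp])).elim
  · by_contra hcon
    have hstep : ∀ t, GoodState F g e t → GoodState F g e (t+1) := by
      intro t hst
      rcases step hk hmn hm1 hunion g e heI heM heF t hst with h | h
      · exact absurd h hcon
      · exact h
    have hbase : GoodState F g e 0 := by
      unfold GoodState
      refine ⟨fun _ => g ⟨0,hm1⟩, fun _ => e ⟨0,hm1⟩, fun _ => ⟨0,hm1⟩,
        ?_, ?_, ?_, ?_, ?_, ?_⟩ <;>
      · intro i hi
        exact absurd hi (by omega)
    have hall : ∀ t, GoodState F g e t := by
      intro t
      induction t with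
      | zero => exact hbase
      | succ t ih => exact hstep t ih
    obtain ⟨c, f, ρ, hcinj, -, -, hρinj, -, -⟩ := hall (m+1)
    have hle : m + 1 ≤ m := by
      have h1 : (Finset.range (m+1)).card ≤ (Finset.univ : Finset (Fin m)).card :=
        Finset.card_le_card_of_injOn ρ (fun a _ => Finset.mem_univ _)
          (fun a ha b hb hab => hρinj a (by simpa using ha) b (by simpa using hb) hab)
      simpa using h1
    omega

end Main

/-- Cooperative Drisko: `2n+k-2` edge sets in a bipartite graph, the union of
every `k` of which contains a matching of size `n`, have a rainbow matching of
size `n`. -/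
theorem stmt_2 {α β : Type*} (n k : ℕ) (hn : 1 ≤ n) (hk : 1 ≤ k)
    (F : Fin (2 * n + k - 2) → Set (α × β))
    (hunion : ∀ K : Finset (Fin (2 * n + k - 2)), K.card = k →
      HasMatchingOfSize n (⋃ i ∈ K, F i)) :
    HasRainbowMatchingOfSize n F := by
  classical
  set P : ℕ → Prop := fun j => HasRainbowMatchingOfSize j F with hP
  letI : DecidablePred P := fun _ => Classical.propDecidable _
  have hP0 : P 0 := by
    refine ⟨⟨fun x => x.elim0, fun a => a.elim0⟩, fun x => x.elim0,
      fun a => a.elim0, fun j => j.elim0, ?_⟩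
    rintro x ⟨p, rfl⟩
    exact p.elim0
  have hm : P (Nat.findGreatest P n) := Nat.findGreatest_spec (Nat.zero_le n) hP0
  have hle : Nat.findGreatest P n ≤ n := Nat.findGreatest_le n
  rcases eq_or_lt_of_le hle with heq | hlt
  · have hm' : HasRainbowMatchingOfSize (Nat.findGreatest P n) F := hm
    rw [heq] at hm'
    exact hm'
  · have hnot : ¬ P (Nat.findGreatest P n + 1) :=
      Nat.findGreatest_is_greatest (Nat.lt_succ_self _) (Nat.succ_le_of_lt hlt)
    exact absurd (key hn hk hlt hunion hm) hnot
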